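/- Let A : ℝ → Matrix (Fin n) (Fin n) ℝ be a continuous family of real n × n matrices and let λ₀ ∈ ℝ be a simple eigenvalue of A(0) (a root of multiplicity one of the characteristic polynomial of A(0) over ℂ). Then there exist δ > 0 and ρ > 0 such that for every ε with |ε| < δ, every eigenvalue μ ∈ ℂ of A(ε) (viewed as a complex matrix) satisfying |μ − λ₀| < ρ is real. -/

import Mathlib

open Polynomial

lemma cont_coeff_prod {ι : Type*} (s : Finset ι) (P : ι → ℝ → ℝ[X])
    (h : ∀ i, ∀ m, Continuous fun ε => (P i ε).coeff m) :
    ∀ k, Continuous fun ε => (∏ i ∈ s, P i ε).coeff k := by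
  classical
  induction s using Finset.induction with
  | empty => intro k; simpa using continuous_const
  | @insert a s ha ih =>
    intro k
    simp only [Finset.prod_insert ha, Polynomial.coeff_mul]
    exact continuous_finset_sum _ fun p _ => (h a p.1).mul (ih p.2)

lemma cont_charpoly_coeff (n : ℕ) (A : ℝ → Matrix (Fin n) (Fin n) ℝ)
    (hA : ∀ i j, Continuous fun ε => A ε i j) (k : ℕ) :
    Continuous fun ε => (A ε).charpoly.coeff k := by
  classical
  have hcm : ∀ i j m, Continuous fun ε => (Matrix.charmatrix (A ε) i j).coeff m := by
    intro i j m
    by_cases hij : i = j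
    · subst hij
      simp only [Matrix.charmatrix_apply_eq, Polynomial.coeff_sub, Polynomial.coeff_X,
        Polynomial.coeff_C]
      split_ifs
      · exact continuous_const.sub (hA i i)
      · exact continuous_const
      · exact continuous_const.sub (hA i i)
      · exact continuous_const
    · simp only [Matrix.charmatrix_apply_ne _ _ _ hij, Polynomial.coeff_neg, Polynomial.coeff_C]
      split_ifs
      · exact (hA i j).neg
      · simpa using continuous_const
  have : (fun ε => (A ε).charpoly.coeff k)
      = fun ε => ∑ σ : Equiv.Perm (Fin n),
          (Equiv.Perm.sign σ : ℤ) • (∏ i, Matrix.charmatrix (A ε) (σ i) i).coeff k := by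
    funext ε
    rw [Matrix.charpoly, Matrix.det_apply, Polynomial.finset_sum_coeff]
    refine Finset.sum_congr rfl fun σ _ => ?_
    rw [Units.smul_def, Polynomial.coeff_smul]
  rw [this]
  exact continuous_finset_sum _ fun σ _ =>
    by simp only [zsmul_eq_mul]; exact continuous_const.mul (cont_coeff_prod Finset.univ (fun i ε => Matrix.charmatrix (A ε) (σ i) i)
      (fun i m => hcm (σ i) i m) k)

/-- Theorem 4, second bullet: a simple real eigenvalue of a continuous family of real
matrices stays real under small perturbations: all nearby eigenvalues of nearby matrices
are real. -/
theorem simple_real_eigenvalue_stays_real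
    (n : ℕ) (A : ℝ → Matrix (Fin n) (Fin n) ℝ)
    (hA : ∀ i j, Continuous fun ε => A ε i j)
    (lam₀ : ℝ)
    (hsimple : (((A 0).map (Complex.ofReal)).charpoly).rootMultiplicity (lam₀ : ℂ) = 1) :
    ∃ δ > (0 : ℝ), ∃ ρ > (0 : ℝ), ∀ ε : ℝ, |ε| < δ →
      ∀ μ : ℂ, (((A ε).map (Complex.ofReal)).charpoly).IsRoot μ →
        ‖μ - (lam₀ : ℂ)‖ < ρ → μ.im = 0 := by
  classical
  have hmap : ∀ ε : ℝ, ((A ε).map (Complex.ofReal)).charpoly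
      = ((A ε).charpoly).map (Complex.ofRealHom) := by
    intro ε
    rw [← Matrix.charpoly_map]
    rfl
  set p : ℂ[X] := ((A 0).charpoly).map (Complex.ofRealHom) with hp
  have hsimple' : rootMultiplicity (lam₀ : ℂ) p = 1 := by rw [hp, ← hmap 0]; exact hsimple
  have hp0 : p ≠ 0 := ((Matrix.charpoly_monic _).map _).ne_zero
  have hroot : p.IsRoot (lam₀ : ℂ) :=
    (rootMultiplicity_pos hp0).mp (by rw [hsimple']; norm_num)
  have hder : (derivative p).eval (lam₀ : ℂ) ≠ 0 := by
    intro h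
    have h2 := (one_lt_rootMultiplicity_iff_isRoot hp0).mpr ⟨hroot, h⟩
    rw [hsimple'] at h2
    exact lt_irrefl 1 h2
  -- degree bounds
  have hdegq : ∀ ε : ℝ, (((A ε).charpoly).map (Complex.ofRealHom)).natDegree < n + 1 := by
    intro ε
    calc (((A ε).charpoly).map (Complex.ofRealHom)).natDegree
        ≤ ((A ε).charpoly).natDegree := Polynomial.natDegree_map_le
      _ = n := by simp [Matrix.charpoly_natDegree_eq_dim (A ε)]
      _ < n + 1 := Nat.lt_succ_self n
  -- the divided-difference function
  set f : ℝ × ℂ × ℂ → ℂ := fun x => ∑ k ∈ Finset.range (n+1),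
      (((A x.1).charpoly.coeff k : ℝ) : ℂ) * ∑ j ∈ Finset.range k,
        x.2.1 ^ j * x.2.2 ^ (k - 1 - j) with hf
  have hfc : Continuous f := by
    refine continuous_finset_sum _ fun k _ => Continuous.mul ?_ ?_
    · exact Complex.continuous_ofReal.comp ((cont_charpoly_coeff n A hA k).comp continuous_fst)
    · exact continuous_finset_sum _ fun j _ =>
        ((continuous_fst.comp continuous_snd).pow j).mul
          ((continuous_snd.comp continuous_snd).pow _)
  -- value at the base point
  have hfval : f (0, (lam₀ : ℂ), (lam₀ : ℂ)) = (derivative p).eval (lam₀ : ℂ) := by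
    have hdd : (derivative p).natDegree < n + 1 :=
      lt_of_le_of_lt (Polynomial.natDegree_derivative_le p)
        (by have := hdegq 0; rw [← hp] at this; omega)
    rw [Polynomial.eval_eq_sum_range' hdd]
    have hcoeff0 : ∀ k, p.coeff k = (((A 0).charpoly.coeff k : ℝ) : ℂ) := by
      intro k; rw [hp, Polynomial.coeff_map]; rfl
    have hL : f (0, (lam₀ : ℂ), (lam₀ : ℂ))
        = ∑ k ∈ Finset.range (n+1), p.coeff k * (k * (lam₀ : ℂ) ^ (k - 1)) := by
      rw [hf]
      refine Finset.sum_congr rfl fun k _ => ?_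
      rw [hcoeff0]
      congr 1
      have : ∀ j ∈ Finset.range k, (lam₀ : ℂ) ^ j * (lam₀ : ℂ) ^ (k - 1 - j)
          = (lam₀ : ℂ) ^ (k - 1) := by
        intro j hj
        rw [← pow_add]
        congr 1
        have := Finset.mem_range.mp hj
        omega
      rw [Finset.sum_congr rfl this, Finset.sum_const, Finset.card_range, nsmul_eq_mul]
    rw [hL]
    rw [Finset.sum_range_succ' (fun k => p.coeff k * (k * (lam₀ : ℂ) ^ (k - 1)))]
    rw [Finset.sum_range_succ (fun i => (derivative p).coeff i * (lam₀ : ℂ) ^ i)]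
    have hpn1 : p.coeff (n + 1) = 0 := by
      apply Polynomial.coeff_eq_zero_of_natDegree_lt
      have := hdegq 0; rw [← hp] at this; omega
    rw [Polynomial.coeff_derivative, hpn1]
    simp only [Nat.cast_zero, zero_mul, mul_zero, add_zero, zero_add, zero_mul]
    refine Finset.sum_congr rfl fun i _ => ?_
    rw [Polynomial.coeff_derivative]
    push_cast
    ring_nf
  -- a neighborhood where f is nonzero
  have hopen : IsOpen {x : ℝ × ℂ × ℂ | f x ≠ 0} := isOpen_ne.preimage hfc
  have hmem : ((0 : ℝ), ((lam₀ : ℂ), (lam₀ : ℂ))) ∈ {x : ℝ × ℂ × ℂ | f x ≠ 0} := by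
    simp only [Set.mem_setOf_eq, hfval]
    exact hder
  obtain ⟨r, hr, hball⟩ := Metric.isOpen_iff.mp hopen _ hmem
  refine ⟨r, hr, r, hr, fun ε hε μ hμroot hμnear => ?_⟩
  by_contra him
  set ν : ℂ := (starRingEnd ℂ) μ with hν
  set q : ℂ[X] := ((A ε).charpoly).map (Complex.ofRealHom) with hq
  have hqμ : q.eval μ = 0 := by
    have := hμroot
    rw [hmap ε] at this
    exact this
  have haev : ∀ z : ℂ, q.eval z = aeval z ((A ε).charpoly) := by
    intro z
    rw [aeval_def, Polynomial.eval_map]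
    rfl
  have hqν : q.eval ν = 0 := by
    rw [haev, hν, Polynomial.aeval_conj, ← haev, hqμ, map_zero]
  have hdiff : q.eval μ - q.eval ν = f (ε, μ, ν) * (μ - ν) := by
    rw [Polynomial.eval_eq_sum_range' (hdegq ε) μ, Polynomial.eval_eq_sum_range' (hdegq ε) ν,
      ← Finset.sum_sub_distrib, hf, Finset.sum_mul]
    refine Finset.sum_congr rfl fun k _ => ?_
    have hgeom := geom_sum₂_mul μ ν k
    have hcoeff : q.coeff k = (((A ε).charpoly.coeff k : ℝ) : ℂ) := by
      rw [hq, Polynomial.coeff_map]; rfl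
    rw [hcoeff, ← mul_sub, ← hgeom]
    ring
  have hfx : f (ε, μ, ν) ≠ 0 := by
    apply hball
    rw [Metric.mem_ball, Prod.dist_eq, Prod.dist_eq]
    have h1 : dist ε (0 : ℝ) < r := by rwa [Real.dist_eq, sub_zero]
    have h2 : dist μ (lam₀ : ℂ) < r := by rwa [Complex.dist_eq]
    have h3 : dist ν (lam₀ : ℂ) < r := by
      rw [Complex.dist_eq, hν]
      have : (starRingEnd ℂ) μ - (lam₀ : ℂ) = (starRingEnd ℂ) (μ - (lam₀ : ℂ)) := by
        rw [map_sub, Complex.conj_ofReal]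
      rw [this, Complex.norm_conj]
      exact hμnear
    exact max_lt h1 (max_lt h2 h3)
  have hsub : μ - ν ≠ 0 := by
    rw [hν, Complex.sub_conj]
    simp only [ne_eq, mul_eq_zero, Complex.ofReal_eq_zero, Complex.I_ne_zero, or_false]
    intro hc
    rcases hc with h | h
    · norm_num at h
    · exact him h
  rw [hqμ, hqν, sub_zero] at hdiff
  exact hsub (by
    have := mul_eq_zero.mp hdiff.symm
    tauto)
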